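/- Let f = h + conj(g) with h(0)=0, h'(0)=1, Re(1 + z h''/h') > α on 𝔻 (0 ≤ α < 1), and g'(z) = ζ z^n h'(z), n ≥ 1. Then for 0 < r < 1, 2π ∫₀^r ρ(1 - |ζ|²ρ^{2n})/(1+ρ)^{4(1-α)} dρ ≤ ∬_{|z|<r} (|h'(z)|² - |g'(z)|²) dx dy ≤ 2π ∫₀^r ρ(1 - |ζ|²ρ^{2n})/(1-ρ)^{4(1-α)} dρ. -/

import Mathlib

open Complex Metric MeasureTheory Set Filter Topology

private lemma aux_quad {b ρ x m : ℝ} (hb : 0 < b) (hρ0 : 0 < ρ) (hρ1 : ρ < 1)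
    (hm : 0 ≤ m) (hx : |x| ≤ m) (hq : m^2 * (1 - ρ^2) ≤ 2*b*ρ^2*x + b^2*ρ^2) :
    -(b*ρ/(1+ρ)) ≤ x ∧ x ≤ b*ρ/(1-ρ) := by
  have h1ρ : 0 < 1 + ρ := by linarith
  have h1ρ' : 0 < 1 - ρ := by linarith
  have hxm : x ≤ m := (abs_le.mp hx).2
  have hxm' : -m ≤ x := (abs_le.mp hx).1
  constructor
  · rcases le_or_gt 0 x with hx0 | hx0
    · have : 0 ≤ b*ρ/(1+ρ) := by positivity
      linarith
    · have hq2 : x^2*(1-ρ^2) ≤ 2*b*ρ^2*x + b^2*ρ^2 := by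
        have h1 : x^2 ≤ m^2 := by nlinarith
        nlinarith [mul_le_mul_of_nonneg_right h1 (by nlinarith : (0:ℝ) ≤ 1-ρ^2)]
      rw [neg_le, ← neg_neg x] at *
      rw [le_div_iff₀ h1ρ]
      have h2 : 0 < -x*(1-ρ) + b*ρ := by nlinarith
      nlinarith [hq2, h2]
  · rw [le_div_iff₀ h1ρ']
    by_contra hcon
    push_neg at hcon
    have h2 : 0 < m*(1+ρ) + b*ρ := by positivity
    have h3 : 0 < m*(1-ρ) - b*ρ := by nlinarith
    have hq3 : m^2*(1-ρ^2) ≤ 2*b*ρ^2*m + b^2*ρ^2 := by nlinarith [mul_le_mul_of_nonneg_left hxm (by positivity : (0:ℝ) ≤ 2*b*ρ^2)]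
    nlinarith [mul_pos h3 h2]

private lemma re_bound {b : ℝ} (hb : 0 < b) {a : ℂ} {ρ : ℝ} (hρ0 : 0 < ρ) (hρ1 : ρ < 1)
    (hle : ‖a‖ ≤ ρ * ‖a + (b:ℂ)‖) :
    -(b*ρ/(1+ρ)) ≤ a.re ∧ a.re ≤ b*ρ/(1-ρ) := by
  have habs : ‖a + (b:ℂ)‖^2 = ‖a‖^2 + 2*b*a.re + b^2 := by
    rw [Complex.sq_norm, Complex.sq_norm, Complex.normSq_apply, Complex.normSq_apply]
    simp [Complex.add_re, Complex.add_im]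
    ring
  have hq : ‖a‖^2 * (1 - ρ^2) ≤ 2*b*ρ^2*a.re + b^2*ρ^2 := by
    have := mul_le_mul hle hle (norm_nonneg a) (by positivity)
    nlinarith [this, habs]
  exact aux_quad hb hρ0 hρ1 (norm_nonneg a) (Complex.abs_re_le_norm a) hq

private lemma nonvanish {α : ℝ} {h : ℂ → ℂ}
    (hhA : AnalyticOnNhd ℂ h (ball (0 : ℂ) 1)) (h1 : deriv h 0 = 1)
    (hconv : ∀ z ∈ ball (0 : ℂ) 1, α < (1 + z * deriv (deriv h) z / deriv h z).re) :
    ∀ z ∈ ball (0 : ℂ) 1, deriv h z ≠ 0 := by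
  intro z₀ hz₀ hzero
  have hball : (0:ℂ) ∈ ball (0:ℂ) 1 := by simp
  have hdA : AnalyticOnNhd ℂ (deriv h) (ball (0:ℂ) 1) := hhA.deriv
  have hz₀ne : z₀ ≠ 0 := by rintro rfl; rw [h1] at hzero; exact one_ne_zero hzero
  have hA0 : AnalyticAt ℂ (deriv h) z₀ := hdA z₀ hz₀
  have hord : analyticOrderAt (deriv h) z₀ ≠ ⊤ := by
    intro htop
    have heq : EqOn (deriv h) 0 (ball (0:ℂ) 1) :=
      hdA.eqOn_zero_of_preconnected_of_eventuallyEq_zero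
        (convex_ball (0:ℂ) 1).isPreconnected hz₀ (analyticOrderAt_eq_top.mp htop)
    have := heq hball
    rw [h1] at this; simpa using this
  lift analyticOrderAt (deriv h) z₀ to ℕ using hord with k hk
  obtain ⟨u, huA, hu0, huev⟩ := (hA0.analyticOrderAt_eq_natCast (n := k)).mp hk.symm
  rcases Nat.eq_zero_or_pos k with rfl | hkpos
  · have := huev.self_of_nhds
    simp only [pow_zero, one_smul, hzero] at this
    exact hu0 this.symm
  obtain ⟨j, rfl⟩ : ∃ j, k = j + 1 := ⟨k - 1, (Nat.succ_pred_eq_of_pos hkpos).symm⟩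
  set k := j + 1
  -- eventual formula for the second derivative
  have huA' : ∀ᶠ z in 𝓝 z₀, AnalyticAt ℂ u z := huA.eventually_analyticAt
  have hdd : ∀ᶠ z in 𝓝 z₀, deriv (deriv h) z
      = (k:ℂ)*(z-z₀)^j * u z + (z-z₀)^k * deriv u z := by
    have hdeq : deriv (deriv h) =ᶠ[nhds z₀] deriv (fun z => (z - z₀)^k • u z) :=
      Filter.EventuallyEq.deriv huev
    filter_upwards [hdeq, huA'] with z hz hzu
    rw [hz]
    have h1' : HasDerivAt (fun z => (z - z₀)^k) ((k:ℂ)*(z-z₀)^j) z := by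
      simpa [Function.comp_def, k] using ((hasDerivAt_pow k (z - z₀)).comp z ((hasDerivAt_id z).sub_const z₀))
    have := (h1'.mul hzu.differentiableAt.hasDerivAt).deriv
    simp only [Pi.mul_def] at this
    simpa [smul_eq_mul, mul_comm, mul_assoc, mul_left_comm] using this
  have hune : ∀ᶠ z in 𝓝 z₀, u z ≠ 0 := huA.continuousAt.eventually_ne hu0
  -- the path ε ↦ (1-ε) z₀
  set φ : ℝ → ℂ := fun ε => (1-(ε:ℂ))*z₀ with hφ
  have ht : Filter.Tendsto φ (nhdsWithin 0 (Ioi 0)) (nhds z₀) := by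
    have : Filter.Tendsto φ (nhds 0) (nhds ((1-((0:ℝ):ℂ))*z₀)) := by
      apply Continuous.tendsto
      continuity
    simpa using this.mono_left nhdsWithin_le_nhds
  -- eventual identity along the path
  have hkey : ∀ᶠ ε in nhdsWithin 0 (Ioi 0),
      (1 + φ ε * deriv (deriv h) (φ ε) / deriv h (φ ε)).re
        = 1 + (-(k:ℝ)*((1-ε)/ε)) + ((φ ε) * deriv u (φ ε) / u (φ ε)).re := by
    filter_upwards [ht.eventually huev, ht.eventually hdd, ht.eventually hune,
      self_mem_nhdsWithin,
      eventually_nhdsWithin_of_eventually_nhds (Filter.Tendsto.eventually_lt_const one_pos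
        (Filter.tendsto_id (α := ℝ)) : ∀ᶠ ε in nhds (0:ℝ), ε < 1)]
        with ε hev hdd2 hu2 hε0 hε1
    have hε0' : (0:ℝ) < ε := hε0
    have hεne : ((ε:ℝ):ℂ) ≠ 0 := by
      simpa using ne_of_gt hε0'
    have hzz : φ ε - z₀ = -(ε:ℂ)*z₀ := by rw [hφ]; ring
    have key : φ ε * deriv (deriv h) (φ ε) / deriv h (φ ε)
        = ((-(k:ℝ)*((1-ε)/ε) : ℝ) : ℂ) + (φ ε) * deriv u (φ ε) / u (φ ε) := by
      rw [hev, hdd2, hzz, smul_eq_mul]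
      have hne : (-(ε:ℂ)*z₀) ≠ 0 := by
        simp [hεne, hz₀ne]
      push_cast
      rw [hφ] at hu2 ⊢
      field_simp
      ring
    rw [key]
    simp [Complex.add_re, Complex.ofReal_re]
    ring
  -- the real part tends to -∞
  have hA : Filter.Tendsto (fun ε : ℝ => 1 + (-(k:ℝ)*((1-ε)/ε)))
      (nhdsWithin 0 (Ioi 0)) Filter.atBot := by
    apply Filter.tendsto_atBot_add_const_left
    have h1 : Filter.Tendsto (fun ε : ℝ => (1-ε)/ε) (nhdsWithin 0 (Ioi 0)) Filter.atTop := by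
      have hnum : Filter.Tendsto (fun ε : ℝ => 1-ε) (nhdsWithin 0 (Ioi 0)) (nhds 1) := by
        have : Filter.Tendsto (fun ε : ℝ => 1-ε) (nhds 0) (nhds (1-0)) :=
          (continuous_const.sub continuous_id).tendsto 0
        simpa using this.mono_left nhdsWithin_le_nhds
      simpa [div_eq_mul_inv] using Filter.Tendsto.pos_mul_atTop one_pos hnum tendsto_inv_nhdsGT_zero
    have h2 := Filter.Tendsto.const_mul_atTop (r := (k:ℝ)) (by positivity) h1
    exact (tendsto_neg_atTop_atBot.comp h2).congr
      (fun x => by simp only [Function.comp_apply]; ring)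
  have hB : Filter.Tendsto (fun ε : ℝ => ((φ ε) * deriv u (φ ε) / u (φ ε)).re)
      (nhdsWithin 0 (Ioi 0)) (nhds ((z₀ * deriv u z₀ / u z₀).re)) := by
    have hc : ContinuousAt (fun z : ℂ => (z * deriv u z / u z).re) z₀ := by
      obtain ⟨r, hr, hballA⟩ : ∃ r > 0, ∀ y ∈ ball z₀ r, AnalyticAt ℂ u y := by
        have := huA.eventually_analyticAt
        rw [Metric.eventually_nhds_iff_ball] at this
        exact this
      have hduc : ContinuousAt (deriv u) z₀ :=
        ((AnalyticOnNhd.deriv hballA) z₀ (Metric.mem_ball_self hr)).continuousAt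
      apply Complex.continuous_re.continuousAt.comp
      exact (continuousAt_id.mul hduc).div huA.continuousAt hu0
    exact hc.tendsto.comp ht
  have hBay : Filter.Tendsto (fun ε : ℝ =>
      (1 + φ ε * deriv (deriv h) (φ ε) / deriv h (φ ε)).re)
      (nhdsWithin 0 (Ioi 0)) Filter.atBot := by
    apply Filter.Tendsto.congr' (Filter.EventuallyEq.symm hkey)
    simpa using hA.atBot_add hB
  -- contradiction with hconv
  have hmem : ∀ᶠ ε in nhdsWithin 0 (Ioi 0), φ ε ∈ ball (0:ℂ) 1 :=
    ht.eventually (Metric.isOpen_ball.eventually_mem hz₀)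
  have hlt : ∀ᶠ ε in nhdsWithin 0 (Ioi 0),
      (1 + φ ε * deriv (deriv h) (φ ε) / deriv h (φ ε)).re < α :=
    hBay.eventually_lt_atBot α
  obtain ⟨ε, h1', h2'⟩ := (hlt.and hmem).exists
  exact absurd (hconv _ h2') (not_lt.mpr h1'.le)

private lemma abssq_add (A B : ℂ) :
    ‖A+B‖^2 = ‖A‖^2 + 2*(A * (starRingEnd ℂ) B).re + ‖B‖^2 := by
  rw [Complex.sq_norm, Complex.sq_norm, Complex.sq_norm, Complex.normSq_apply,
    Complex.normSq_apply, Complex.normSq_apply]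
  simp [Complex.add_re, Complex.add_im, Complex.mul_re]
  ring

private lemma re_mul_conj (A d : ℂ) (hd : d ≠ 0) :
    (A * (starRingEnd ℂ) d).re = (A/d).re * Complex.normSq d := by
  have h1 : A * (starRingEnd ℂ) d = (Complex.normSq d : ℂ) * (A/d) := by
    rw [mul_comm ((Complex.normSq d : ℂ)) _, div_mul_eq_mul_div, eq_div_iff hd,
      mul_assoc, mul_comm ((starRingEnd ℂ) d) d, Complex.mul_conj, mul_comm]
  rw [h1, Complex.re_ofReal_mul, mul_comm]

private lemma abound {α : ℝ} (hα : 0 ≤ α ∧ α < 1) {h : ℂ → ℂ}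
    (hhA : AnalyticOnNhd ℂ h (ball (0 : ℂ) 1)) (h1 : deriv h 0 = 1)
    (hconv : ∀ z ∈ ball (0 : ℂ) 1, α < (1 + z * deriv (deriv h) z / deriv h z).re) :
    ∀ z ∈ ball (0:ℂ) 1, z ≠ 0 →
      -(2*(1-α)*(‖z‖)/(1+‖z‖))
          ≤ (z * deriv (deriv h) z / deriv h z).re ∧
      (z * deriv (deriv h) z / deriv h z).re ≤ 2*(1-α)*(‖z‖)/(1-‖z‖) := by
  have hnv := nonvanish hhA h1 hconv
  set c : ℝ := 2*(1-α) with hcdef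
  have hc : 0 < c := by simp only [hcdef]; linarith [hα.2]
  have hre : ∀ w ∈ ball (0:ℂ) 1, -(c/2) < (w * deriv (deriv h) w / deriv h w).re := by
    intro w hw
    have := hconv w hw
    have h2 : (1 + w * deriv (deriv h) w / deriv h w).re
        = 1 + (w * deriv (deriv h) w / deriv h w).re := by
      simp [Complex.add_re]
    rw [h2] at this
    simp only [hcdef]; linarith
  have denom_ne : ∀ w ∈ ball (0:ℂ) 1,
      w * deriv (deriv h) w + (c:ℂ) * deriv h w ≠ 0 := by
    intro w hw heq
    have hd := hnv w hw
    have hquot : w * deriv (deriv h) w / deriv h w = -(c:ℂ) := by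
      have : w * deriv (deriv h) w = -(c:ℂ) * deriv h w := by
        linear_combination heq
      rw [this, mul_div_assoc, div_self hd, mul_one]
    have := hre w hw
    rw [hquot] at this
    simp only [Complex.neg_re, Complex.ofReal_re] at this
    linarith
  set ω : ℂ → ℂ := fun w => (w * deriv (deriv h) w) /
      (w * deriv (deriv h) w + (c:ℂ) * deriv h w) with hω
  have hddA : AnalyticOnNhd ℂ (deriv (deriv h)) (ball (0:ℂ) 1) := hhA.deriv.deriv
  have hdiff : DifferentiableOn ℂ ω (ball (0:ℂ) 1) := by
    apply DifferentiableOn.div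
    · exact (differentiable_id.differentiableOn).mul hddA.differentiableOn
    · exact ((differentiable_id.differentiableOn).mul hddA.differentiableOn).add
        ((differentiableOn_const _).mul hhA.deriv.differentiableOn)
    · exact denom_ne
  have hmaps : MapsTo ω (ball (0:ℂ) 1) (ball (0:ℂ) 1) := by
    intro w hw
    rw [mem_ball_zero_iff]
    set num := w * deriv (deriv h) w with hnum
    set den := num + (c:ℂ) * deriv h w with hden
    have hdne : den ≠ 0 := denom_ne w hw
    have hd := hnv w hw
    have hlt : ‖num‖ < ‖den‖ := by
      have habs : ‖den‖^2
          = ‖num‖^2 + 2*(num * (starRingEnd ℂ) ((c:ℂ) * deriv h w)).re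
            + ‖(c:ℂ) * deriv h w‖^2 := by
        rw [hden]; exact abssq_add _ _
      have hre2 : (num * (starRingEnd ℂ) ((c:ℂ) * deriv h w)).re
          = c * ((num / deriv h w).re * Complex.normSq (deriv h w)) := by
        have hmc : num * (starRingEnd ℂ) ((c:ℂ) * deriv h w)
            = (c:ℂ) * (num * (starRingEnd ℂ) (deriv h w)) := by
          rw [map_mul, Complex.conj_ofReal]; ring
        rw [hmc, Complex.re_ofReal_mul, re_mul_conj _ _ hd]
      have hpos : 0 < Complex.normSq (deriv h w) := Complex.normSq_pos.mpr hd
      have hre3 : -(c/2) < (num / deriv h w).re := hre w hw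
      have habs2 : ‖(c:ℂ) * deriv h w‖^2 = c^2 * Complex.normSq (deriv h w) := by
        rw [norm_mul, mul_pow, Complex.sq_norm, Complex.sq_norm, Complex.normSq_ofReal]
        ring
      have hsq : ‖num‖^2 < ‖den‖^2 := by
        rw [habs, hre2, habs2]
        have hfac : 0 < c * Complex.normSq (deriv h w) * (2*(num / deriv h w).re + c) :=
          mul_pos (mul_pos hc hpos) (by linarith)
        nlinarith [hfac]
      exact lt_of_pow_lt_pow_left₀ 2 (norm_nonneg den) hsq
    have : ‖ω w‖ = ‖num‖ / ‖den‖ := by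
      rw [hω]; simp only [norm_div]; rfl
    rw [this, div_lt_one (norm_pos_iff.mpr hdne)]
    exact hlt
  intro z hz hzne
  have hz1 : ‖z‖ < 1 := mem_ball_zero_iff.mp hz
  have hρ0 : 0 < ‖z‖ := norm_pos_iff.mpr hzne
  have hsch := Complex.norm_le_norm_of_mapsTo_ball hdiff (hmaps.mono_right ball_subset_closedBall) (by simp [hω]) hz1
  have hd := hnv z hz
  have hdenz := denom_ne z hz
  set a : ℂ := z * deriv (deriv h) z / deriv h z with ha
  have haeq : a + (c:ℂ) = (z * deriv (deriv h) z + (c:ℂ)*deriv h z)/deriv h z := by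
    rw [ha]; field_simp
  have hle : ‖a‖ ≤ ‖z‖ * ‖a + (c:ℂ)‖ := by
    have h1' : ‖a‖ = ‖z * deriv (deriv h) z‖ / ‖deriv h z‖ := by
      rw [ha, norm_div]
    have h2' : ‖a + (c:ℂ)‖
        = ‖z * deriv (deriv h) z + (c:ℂ)*deriv h z‖ / ‖deriv h z‖ := by
      rw [haeq, norm_div]
    have h3' : ‖ω z‖
        = ‖z * deriv (deriv h) z‖
          / ‖z * deriv (deriv h) z + (c:ℂ)*deriv h z‖ := by
      rw [hω]; simp only [norm_div]
    rw [h3'] at hsch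
    rw [h1', h2', ← mul_div_assoc]
    gcongr
    exact (div_le_iff₀ (norm_pos_iff.mpr hdenz)).mp hsch
  exact re_bound hc hρ0 hz1 hle

private lemma hasDerivAt_normSq {c : ℝ → ℂ} {c' : ℂ} {t : ℝ} (hc : HasDerivAt c c' t) :
    HasDerivAt (fun s => Complex.normSq (c s)) (2 * (c' * (starRingEnd ℂ) (c t)).re) t := by
  have hstar : HasDerivAt (fun s => (starRingEnd ℂ) (c s)) ((starRingEnd ℂ) c') t := by
    exact hc.star
  have hmul := hc.mul hstar
  have hre := Complex.reCLM.hasFDerivAt.comp_hasDerivAt t hmul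
  have heq : (fun s => Complex.reCLM (c s * (starRingEnd ℂ) (c s)))
      = fun s => Complex.normSq (c s) := by
    funext s
    simp [Complex.mul_conj]
  rw [show (⇑Complex.reCLM ∘ (c * fun s => (starRingEnd ℂ) (c s))) = fun s => Complex.normSq (c s) from heq] at hre
  refine hre.congr_deriv ?_
  simp [Complex.mul_re, Complex.conj_re, Complex.conj_im]
  ring

private lemma distortion {α : ℝ} (hα : 0 ≤ α ∧ α < 1) {h : ℂ → ℂ}
    (hhA : AnalyticOnNhd ℂ h (ball (0 : ℂ) 1)) (h1 : deriv h 0 = 1)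
    (hconv : ∀ z ∈ ball (0 : ℂ) 1, α < (1 + z * deriv (deriv h) z / deriv h z).re) :
    ∀ z ∈ ball (0:ℂ) 1,
      1 / (1 + ‖z‖) ^ (4*(1-α)) ≤ ‖deriv h z‖^2 ∧
      ‖deriv h z‖^2 ≤ 1 / (1 - ‖z‖) ^ (4*(1-α)) := by
  intro z hz
  rcases eq_or_ne z 0 with rfl | hzne
  · simp [h1, Real.one_rpow]
  set β : ℝ := 4*(1-α) with hβdef
  have hβ : 0 < β := by simp only [hβdef]; linarith [hα.2]
  set ρ := ‖z‖ with hρdef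
  have hρ0 : 0 < ρ := norm_pos_iff.mpr hzne
  have hρ1 : ρ < 1 := mem_ball_zero_iff.mp hz
  set e : ℂ := z / (ρ:ℂ) with he
  have hρne : ((ρ:ℝ):ℂ) ≠ 0 := by simpa using hρ0.ne'
  have hez : (ρ:ℂ) * e = z := by rw [he]; field_simp
  have habse : ‖e‖ = 1 := by
    rw [he, norm_div, Complex.norm_real, Real.norm_eq_abs, abs_of_pos hρ0, ← hρdef, div_self hρ0.ne']
  set γ : ℝ → ℂ := fun t => (t:ℂ)*e with hγ
  have habsγ : ∀ t : ℝ, 0 ≤ t → ‖γ t‖ = t := by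
    intro t ht
    rw [hγ]; simp [norm_mul, Complex.norm_real, habse, _root_.abs_of_nonneg ht]
  have hmem : ∀ t:ℝ, t ∈ Icc 0 ρ → (γ t) ∈ ball (0:ℂ) 1 := by
    intro t ht
    rw [mem_ball_zero_iff, habsγ t ht.1]
    exact lt_of_le_of_lt ht.2 hρ1
  set G : ℝ → ℝ := fun t => Complex.normSq (deriv h (γ t)) with hG
  have hγd : ∀ t : ℝ, HasDerivAt γ e t := by
    intro t
    simpa using (Complex.ofRealCLM.hasDerivAt (x := t)).mul_const e
  have hcd : ∀ t ∈ Icc (0:ℝ) ρ,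
      HasDerivAt (fun s => deriv h (γ s)) (deriv (deriv h) (γ t) * e) t := by
    intro t ht
    have hA := (hhA.deriv (γ t) (hmem t ht)).differentiableAt.hasDerivAt
    simpa [mul_comm, Function.comp_def] using hA.comp t (hγd t)
  set G' : ℝ → ℝ :=
    fun t => 2 * ((deriv (deriv h) (γ t) * e) * (starRingEnd ℂ) (deriv h (γ t))).re with hG'
  have hGd : ∀ t ∈ Icc (0:ℝ) ρ, HasDerivAt G (G' t) t :=
    fun t ht => hasDerivAt_normSq (hcd t ht)
  -- key derivative bound on the interior
  have hkey : ∀ t ∈ Ioo (0:ℝ) ρ,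
      -(β * G t) ≤ G' t * (1+t) ∧ G' t * (1-t) ≤ β * G t := by
    intro t ht
    have ht0 : 0 < t := ht.1
    have ht1 : t < 1 := lt_trans ht.2 hρ1
    have htmem : γ t ∈ ball (0:ℂ) 1 := hmem t ⟨ht0.le, ht.2.le⟩
    have hγne : γ t ≠ 0 := by
      intro hcon
      have := habsγ t ht0.le
      rw [hcon] at this; simp at this; linarith
    have hd := nonvanish hhA h1 hconv (γ t) htmem
    have hN : 0 < Complex.normSq (deriv h (γ t)) := Complex.normSq_pos.mpr hd
    have hab := abound hα hhA h1 hconv (γ t) htmem hγne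
    rw [habsγ t ht0.le] at hab
    set a : ℂ := γ t * deriv (deriv h) (γ t) / deriv h (γ t) with ha
    -- G' t = 2 * a.re * N / t
    have hre_eq : G' t = 2 * a.re * Complex.normSq (deriv h (γ t)) / t := by
      simp only [hG']
      have h1' : (γ t * deriv (deriv h) (γ t)) * (starRingEnd ℂ) (deriv h (γ t))
          = ((t:ℝ):ℂ) * ((deriv (deriv h) (γ t) * e) * (starRingEnd ℂ) (deriv h (γ t))) := by
        rw [hγ]; ring
      have h2' := re_mul_conj (γ t * deriv (deriv h) (γ t)) (deriv h (γ t)) hd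
      rw [h1', Complex.re_ofReal_mul] at h2'
      rw [← ha] at h2'
      rw [eq_div_iff ht0.ne']
      linarith [h2']
    have hlow : -(2*(1-α)*t) ≤ a.re * (1+t) := by
      have := hab.1
      rw [← neg_div, div_le_iff₀ (by linarith : (0:ℝ) < 1+t)] at this
      linarith
    have hhigh : a.re * (1-t) ≤ 2*(1-α)*t := by
      have := hab.2
      rw [le_div_iff₀ (by linarith : (0:ℝ) < 1-t)] at this
      linarith
    constructor
    · rw [hre_eq]
      simp only [hG, hβdef]
      rw [div_mul_eq_mul_div, le_div_iff₀ ht0]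
      nlinarith [mul_le_mul_of_nonneg_left hlow hN.le]
    · rw [hre_eq]
      simp only [hG, hβdef]
      rw [div_mul_eq_mul_div, div_le_iff₀ ht0]
      nlinarith [mul_le_mul_of_nonneg_left hhigh hN.le]
  -- endpoints
  have hγ0 : γ 0 = 0 := by simp [hγ]
  have hγρ : γ ρ = z := by rw [hγ]; exact hez
  have hG0 : G 0 = 1 := by simp [hG, hγ0, h1]
  have hGρ : G ρ = Complex.normSq (deriv h z) := by simp [hG, hγρ]
  have hrd1 : ∀ t ∈ Icc (0:ℝ) ρ,
      HasDerivAt (fun t:ℝ => (1+t)^β) (β*(1+t)^(β-1)) t := by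
    intro t ht
    have h0 : (1:ℝ)+t ≠ 0 := by have := ht.1; positivity
    have := (Real.hasDerivAt_rpow_const (x := 1+t) (p := β) (Or.inl h0)).comp t
      ((hasDerivAt_id t).const_add 1)
    simpa [Function.comp_def] using this
  have hrd2 : ∀ t ∈ Icc (0:ℝ) ρ,
      HasDerivAt (fun t:ℝ => (1-t)^β) (β*(1-t)^(β-1)*(-1)) t := by
    intro t ht
    have h0 : (1:ℝ)-t ≠ 0 := by have := lt_of_le_of_lt ht.2 hρ1; intro hc; linarith
    have := (Real.hasDerivAt_rpow_const (x := 1-t) (p := β) (Or.inl h0)).comp t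
      ((hasDerivAt_id t).const_sub 1)
    simpa [Function.comp_def] using this
  have hPd : ∀ t ∈ Icc (0:ℝ) ρ, HasDerivAt (fun t => G t * (1+t)^β)
      (G' t * (1+t)^β + G t * (β*(1+t)^(β-1))) t :=
    fun t ht => (hGd t ht).mul (hrd1 t ht)
  have hQd : ∀ t ∈ Icc (0:ℝ) ρ, HasDerivAt (fun t => G t * (1-t)^β)
      (G' t * (1-t)^β + G t * (β*(1-t)^(β-1)*(-1))) t :=
    fun t ht => (hGd t ht).mul (hrd2 t ht)
  have hmono : MonotoneOn (fun t => G t * (1+t)^β) (Icc 0 ρ) := by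
    apply monotoneOn_of_deriv_nonneg (convex_Icc 0 ρ)
    · exact fun t ht => ((hPd t ht).continuousAt).continuousWithinAt
    · intro t ht
      rw [interior_Icc] at ht
      exact ((hPd t (Ioo_subset_Icc_self ht)).differentiableAt).differentiableWithinAt
    · intro t ht
      rw [interior_Icc] at ht
      rw [(hPd t (Ioo_subset_Icc_self ht)).deriv]
      have hk := hkey t ht
      have h0t : (0:ℝ) < 1 + t := by have := ht.1; linarith
      have hsplit : (1+t)^(β-1) * (1+t) = (1+t)^β := by
        rw [← Real.rpow_add_one (ne_of_gt h0t) (β-1)]; norm_num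
      have heq3 : G' t * (1+t)^β + G t * (β*(1+t)^(β-1))
          = (1+t)^(β-1) * (G' t * (1+t) + β * G t) := by rw [← hsplit]; ring
      rw [heq3]
      have hpow : 0 < (1+t)^(β-1) := Real.rpow_pos_of_pos h0t _
      have := hk.1
      nlinarith [hpow, this]
  have hanti : AntitoneOn (fun t => G t * (1-t)^β) (Icc 0 ρ) := by
    apply antitoneOn_of_deriv_nonpos (convex_Icc 0 ρ)
    · exact fun t ht => ((hQd t ht).continuousAt).continuousWithinAt
    · intro t ht
      rw [interior_Icc] at ht
      exact ((hQd t (Ioo_subset_Icc_self ht)).differentiableAt).differentiableWithinAt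
    · intro t ht
      rw [interior_Icc] at ht
      rw [(hQd t (Ioo_subset_Icc_self ht)).deriv]
      have hk := hkey t ht
      have h0t : (0:ℝ) < 1 - t := by have := lt_of_lt_of_le ht.2 (le_refl ρ); have := hρ1; have := ht.2; linarith
      have hsplit : (1-t)^(β-1) * (1-t) = (1-t)^β := by
        rw [← Real.rpow_add_one (ne_of_gt h0t) (β-1)]; norm_num
      have heq3 : G' t * (1-t)^β + G t * (β*(1-t)^(β-1)*(-1))
          = (1-t)^(β-1) * (G' t * (1-t) - β * G t) := by rw [← hsplit]; ring
      rw [heq3]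
      have hpow : 0 < (1-t)^(β-1) := Real.rpow_pos_of_pos h0t _
      have := hk.2
      nlinarith [hpow, this]
  have hmem0 : (0:ℝ) ∈ Icc (0:ℝ) ρ := ⟨le_refl 0, hρ0.le⟩
  have hmemρ : ρ ∈ Icc (0:ℝ) ρ := ⟨hρ0.le, le_refl ρ⟩
  have hlow := hmono hmem0 hmemρ hρ0.le
  have hhigh := hanti hmem0 hmemρ hρ0.le
  simp only [hG0, hGρ] at hlow hhigh
  norm_num [Real.one_rpow] at hlow hhigh
  have hp1 : 0 < (1+ρ)^β := Real.rpow_pos_of_pos (by linarith) _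
  have hp2 : 0 < (1-ρ)^β := Real.rpow_pos_of_pos (by linarith) _
  constructor
  · rw [Complex.sq_norm, div_le_iff₀ hp1]
    linarith [hlow]
  · rw [Complex.sq_norm, le_div_iff₀ hp2]
    linarith [hhigh]

private lemma radial_integral (φ : ℝ → ℝ) {r : ℝ} (hr : 0 < r) :
    ∫ z in ball (0:ℂ) r, φ (‖z‖)
      = 2*Real.pi * ∫ y in (0:ℝ)..r, y * φ y := by
  have h0 := MeasureTheory.integral_fun_norm_addHaar (E := ℂ) volume
    (fun y => (Iio r).indicator φ y)
  have hl : (fun x : ℂ => (Iio r).indicator φ ‖x‖)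
      = (ball (0:ℂ) r).indicator (fun x => φ (‖x‖)) := by
    funext x
    by_cases hx : ‖x‖ < r
    · rw [Set.indicator_of_mem (by exact hx : ‖x‖ ∈ Iio r),
        Set.indicator_of_mem (mem_ball_zero_iff.mpr hx)]
    · rw [Set.indicator_of_notMem (by exact hx : ‖x‖ ∉ Iio r),
        Set.indicator_of_notMem (fun hc => hx (mem_ball_zero_iff.mp hc))]
  rw [hl, MeasureTheory.integral_indicator measurableSet_ball] at h0
  rw [h0]
  have hdim : Module.finrank ℝ ℂ = 2 := Complex.finrank_real_complex
  rw [hdim]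
  have hvol : volume.real (ball (0:ℂ) 1) = Real.pi := by
    rw [measureReal_def, Complex.volume_ball]
    simp [ENNReal.toReal_mul]
  rw [hvol]
  have hind : (fun y : ℝ => y ^ (2-1) • (Iio r).indicator φ y)
      = fun y : ℝ => (Iio r).indicator (fun y => y * φ y) y := by
    funext y
    by_cases hy : y ∈ Iio r
    · rw [Set.indicator_of_mem hy, Set.indicator_of_mem hy]
      simp
    · rw [Set.indicator_of_notMem hy, Set.indicator_of_notMem hy]
      simp
  rw [hind, MeasureTheory.setIntegral_indicator measurableSet_Iio,
    Set.Ioi_inter_Iio]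
  rw [intervalIntegral.integral_of_le hr.le, MeasureTheory.integral_Ioc_eq_integral_Ioo]
  rw [smul_eq_mul, nsmul_eq_mul]
  push_cast
  ring

theorem stmt_15 (α : ℝ) (hα : 0 ≤ α ∧ α < 1)
    (ζ : ℂ) (hζ : ‖ζ‖ ≤ 1) (n : ℕ) (hn : 1 ≤ n)
    (h g : ℂ → ℂ)
    (hhA : AnalyticOnNhd ℂ h (ball (0 : ℂ) 1))
    (hgA : AnalyticOnNhd ℂ g (ball (0 : ℂ) 1))
    (h0 : h 0 = 0) (h1 : deriv h 0 = 1)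
    (hconv : ∀ z ∈ ball (0 : ℂ) 1,
      α < (1 + z * deriv (deriv h) z / deriv h z).re)
    (hrel : ∀ z ∈ ball (0 : ℂ) 1, deriv g z = ζ * z ^ n * deriv h z) :
    ∀ r : ℝ, 0 < r → r < 1 →
      2 * Real.pi * (∫ ρ in (0 : ℝ)..r,
          ρ * (1 - ‖ζ‖ ^ 2 * ρ ^ (2 * n)) / (1 + ρ) ^ (4 * (1 - α))) ≤
        (∫ z in ball (0 : ℂ) r,
          (‖(deriv h z)‖ ^ 2 - ‖(deriv g z)‖ ^ 2)) ∧
      (∫ z in ball (0 : ℂ) r,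
          (‖(deriv h z)‖ ^ 2 - ‖(deriv g z)‖ ^ 2)) ≤
        2 * Real.pi * ∫ ρ in (0 : ℝ)..r,
          ρ * (1 - ‖ζ‖ ^ 2 * ρ ^ (2 * n)) / (1 - ρ) ^ (4 * (1 - α)) := by
  intro r hr0 hr1
  have hsub : ball (0:ℂ) r ⊆ ball (0:ℂ) 1 := ball_subset_ball hr1.le
  have hsub2 : closedBall (0:ℂ) r ⊆ ball (0:ℂ) 1 := closedBall_subset_ball hr1
  set φm : ℝ → ℝ :=
    fun y => (1 - ‖ζ‖^2 * y^(2*n)) / (1+y)^(4*(1-α)) with hφm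
  set φp : ℝ → ℝ :=
    fun y => (1 - ‖ζ‖^2 * y^(2*n)) / (1-y)^(4*(1-α)) with hφp
  set F : ℂ → ℝ :=
    fun z => ‖deriv h z‖^2 - ‖deriv g z‖^2 with hFdef
  have hdist := distortion hα hhA h1 hconv
  have hF : ∀ z ∈ ball (0:ℂ) 1,
      F z = (1 - ‖ζ‖^2 * ‖z‖^(2*n)) * ‖deriv h z‖^2 := by
    intro z hzm
    rw [hFdef]
    simp only [hrel z hzm, norm_mul, norm_pow]
    rw [pow_mul, mul_pow, mul_pow]
    ring
  have hbound : ∀ z ∈ ball (0:ℂ) r,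
      φm (‖z‖) ≤ F z ∧ F z ≤ φp (‖z‖) := by
    intro z hzm
    have hz1 := hsub hzm
    have habs1 : ‖z‖ < 1 := mem_ball_zero_iff.mp hz1
    have hA0 : 0 ≤ 1 - ‖ζ‖^2 * ‖z‖^(2*n) := by
      have h1' : ‖ζ‖^2 ≤ 1 := pow_le_one₀ (norm_nonneg ζ) hζ
      have h2' : ‖z‖^(2*n) ≤ 1 := pow_le_one₀ (norm_nonneg z) habs1.le
      nlinarith [pow_nonneg (norm_nonneg ζ) 2, pow_nonneg (norm_nonneg z) (2*n)]
    obtain ⟨hd1, hd2⟩ := hdist z hz1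
    rw [hF z hz1]
    constructor
    · simp only [hφm]
      calc (1 - ‖ζ‖^2 * ‖z‖^(2*n)) / (1+‖z‖)^(4*(1-α))
          = (1 - ‖ζ‖^2 * ‖z‖^(2*n))
            * (1 / (1+‖z‖)^(4*(1-α))) := by rw [mul_one_div]
        _ ≤ _ := mul_le_mul_of_nonneg_left hd1 hA0
    · simp only [hφp]
      calc (1 - ‖ζ‖^2 * ‖z‖^(2*n)) * ‖deriv h z‖^2
          ≤ (1 - ‖ζ‖^2 * ‖z‖^(2*n))
            * (1 / (1-‖z‖)^(4*(1-α))) := mul_le_mul_of_nonneg_left hd2 hA0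
        _ = _ := by rw [mul_one_div]
  -- integrability
  have hFc : ContinuousOn F (ball (0:ℂ) 1) := by
    apply ContinuousOn.sub
    · exact (continuous_norm.comp_continuousOn hhA.deriv.continuousOn).pow 2
    · exact (continuous_norm.comp_continuousOn hgA.deriv.continuousOn).pow 2
  have hFi : IntegrableOn F (ball (0:ℂ) r) := by
    apply MeasureTheory.IntegrableOn.mono_set _ ball_subset_closedBall
    exact ((hFc.mono hsub2).integrableOn_compact (isCompact_closedBall _ _))
  have hmc : ContinuousOn (fun z : ℂ => φm (‖z‖)) (closedBall (0:ℂ) r) := by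
    apply ContinuousOn.div
    · exact (continuous_const.sub
        ((continuous_const.mul (continuous_norm.pow (2*n))))).continuousOn
    · exact ((continuous_const.add continuous_norm).continuousOn).rpow_const
        (fun z _ => Or.inl (show (1:ℝ) + ‖z‖ ≠ 0 by positivity))
    · intro z _
      exact (Real.rpow_pos_of_pos (by positivity) _).ne'
  have hpc : ContinuousOn (fun z : ℂ => φp (‖z‖)) (closedBall (0:ℂ) r) := by
    apply ContinuousOn.div
    · exact (continuous_const.sub
        ((continuous_const.mul (continuous_norm.pow (2*n))))).continuousOn
    · apply ContinuousOn.rpow_const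
        ((continuous_const.sub continuous_norm).continuousOn)
      intro z hzm
      left
      have : ‖z‖ ≤ r := mem_closedBall_zero_iff.mp hzm
      intro hc; change (1:ℝ) - ‖z‖ = 0 at hc; linarith
    · intro z hzm
      have : ‖z‖ ≤ r := mem_closedBall_zero_iff.mp hzm
      exact (Real.rpow_pos_of_pos (by linarith) _).ne'
  have hmi : IntegrableOn (fun z : ℂ => φm (‖z‖)) (ball (0:ℂ) r) :=
    (hmc.integrableOn_compact (isCompact_closedBall _ _)).mono_set ball_subset_closedBall
  have hpi : IntegrableOn (fun z : ℂ => φp (‖z‖)) (ball (0:ℂ) r) :=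
    (hpc.integrableOn_compact (isCompact_closedBall _ _)).mono_set ball_subset_closedBall
  have hIm := radial_integral φm hr0
  have hIp := radial_integral φp hr0
  have hcongm : (∫ ρ in (0:ℝ)..r,
      ρ * (1 - ‖ζ‖ ^ 2 * ρ ^ (2 * n)) / (1 + ρ) ^ (4 * (1 - α)))
      = ∫ y in (0:ℝ)..r, y * φm y :=
    intervalIntegral.integral_congr (fun x _ => by rw [hφm, ← mul_div_assoc])
  have hcongp : (∫ ρ in (0:ℝ)..r,
      ρ * (1 - ‖ζ‖ ^ 2 * ρ ^ (2 * n)) / (1 - ρ) ^ (4 * (1 - α)))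
      = ∫ y in (0:ℝ)..r, y * φp y :=
    intervalIntegral.integral_congr (fun x _ => by rw [hφp, ← mul_div_assoc])
  constructor
  · rw [hcongm, ← hIm]
    exact MeasureTheory.setIntegral_mono_on hmi hFi measurableSet_ball
      (fun z hzm => (hbound z hzm).1)
  · rw [hcongp, ← hIp]
    exact MeasureTheory.setIntegral_mono_on hFi hpi measurableSet_ball
      (fun z hzm => (hbound z hzm).2)
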